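/- Let p be a homogeneous element of ℤ⟨A,D⟩ of degree n. If p = f(c,d) + g(c,d)·D = f'(c,d) + g'(c,d)·D, where f, f' are homogeneous cd-polynomials of degree n and g, g' are homogeneous cd-polynomials of degree n−1, then f = f' and g = g'. -/

import Mathlib

noncomputable section

abbrev R : Type := MonoidAlgebra ℤ (FreeMonoid Bool)

def A : R := MonoidAlgebra.single (FreeMonoid.of false) 1
def D : R := MonoidAlgebra.single (FreeMonoid.of true) 1
def c : R := A + D
def d : R := A * D + D * A

/-- `p` is homogeneous of degree `n`: every word in its support has length `n`. -/
def Homog (n : ℕ) (p : R) : Prop := ∀ w ∈ p.coeff.support, FreeMonoid.length w = n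

/-- The ring automorphism of `R` induced by swapping `A` and `D`. -/
def σ : R →+* R := MonoidAlgebra.mapDomainRingHom ℤ (FreeMonoid.map not)

lemma σ_single (w : FreeMonoid Bool) (a : ℤ) :
    σ (MonoidAlgebra.single w a) = MonoidAlgebra.single (FreeMonoid.map not w) a := by
  simp [σ, MonoidAlgebra.mapDomainRingHom, Finsupp.mapDomain_single]

lemma σ_A : σ A = D := by
  simp [A, D, σ_single, FreeMonoid.map_of]

lemma σ_D : σ D = A := by
  simp [A, D, σ_single, FreeMonoid.map_of]

lemma σ_fix {x : R} (hx : x ∈ Subring.closure {c, d}) : σ x = x := by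
  induction hx using Subring.closure_induction with
  | mem y hy =>
    rcases hy with h | h
    · subst h; simp [c, map_add, σ_A, σ_D, add_comm]
    · subst h; simp [d, map_add, map_mul, σ_A, σ_D, add_comm]
  | zero => simp
  | one => simp
  | add x y _ _ hx hy => simp [map_add, hx, hy]
  | neg x _ hx => simp [map_neg, hx]
  | mul x y _ _ hx hy => simp [map_mul, hx, hy]

lemma DA_ne : D - A ≠ 0 := by
  intro h
  have := congrArg (fun p : R => p.coeff (FreeMonoid.of true)) h
  simp only [A, D, MonoidAlgebra.coeff_sub, MonoidAlgebra.coeff_single] at this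
  rw [Finsupp.sub_apply] at this
  rw [show (Finsupp.single (FreeMonoid.of true) (1 : ℤ)) (FreeMonoid.of true) = 1 from
    Finsupp.single_eq_same] at this
  rw [Finsupp.single_eq_of_ne (fun h => Bool.noConfusion (FreeMonoid.of_injective h))] at this
  simp at this

theorem cd_plus_cdD_unique (n : ℕ) (f f' g g' : R)
    (hf : f ∈ Subring.closure {c, d}) (hf' : f' ∈ Subring.closure {c, d})
    (hg : g ∈ Subring.closure {c, d}) (hg' : g' ∈ Subring.closure {c, d})
    (hfn : Homog n f) (hf'n : Homog n f')
    (hgn : Homog (n - 1) g) (hg'n : Homog (n - 1) g')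
    (heq : f + g * D = f' + g' * D) :
    f = f' ∧ g = g' := by
  have h1 : f - f' = (g' - g) * D := by
    rw [sub_mul, sub_eq_sub_iff_add_eq_add, heq, add_comm]
  have h2 : f - f' = (g' - g) * A := by
    have := congrArg σ h1
    rwa [map_sub, map_mul, map_sub, σ_D, σ_fix hf, σ_fix hf', σ_fix hg, σ_fix hg'] at this
  have h3 : (g' - g) * (D - A) = 0 := by
    rw [mul_sub, ← h1, ← h2, sub_self]
  have hgg : g' - g = 0 := by
    rcases mul_eq_zero.mp h3 with h | h
    · exact h
    · exact absurd h DA_ne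
  have hg2 : g = g' := (sub_eq_zero.mp hgg).symm
  refine ⟨?_, hg2⟩
  have : f - f' = 0 := by rw [h1, hgg, zero_mul]
  exact sub_eq_zero.mp this
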